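/- arXiv:2601.08989 — 2 statements merged into one kernel-verified Lean document; each statement's English description precedes it below -/
import Mathlib

section
/- Let m, n ≥ 2 be integers and let S* be the set of all compound rotations of the m × n Torus Puzzle, i.e., all permutations of the form ρ_i^k with 1 ≤ k ≤ n − 1 or γ_j^k with 1 ≤ k ≤ m − 1. Then there exists an element g of G(m,n) such that every finite list of elements of S* whose composition equals g has length at least log₂((m·n)! / 2) / log₂(2·m·n) − 1. In particular, some sortable m × n instance has drag number (and hence push number) Ω(m·n). -/
/- Unit rightward rotation of row i of the m x n Torus Puzzle. -/
def rowRot (m n : ℕ) (i : Fin m) : Equiv.Perm (Fin m × Fin n) where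
  toFun p := if p.1 = i then (i, finRotate n p.2) else p
  invFun p := if p.1 = i then (i, (finRotate n).symm p.2) else p
  left_inv := by rintro ⟨a, b⟩; by_cases h : a = i <;> simp [h, -finRotate_apply, -finRotate_symm_apply]
  right_inv := by rintro ⟨a, b⟩; by_cases h : a = i <;> simp [h, -finRotate_apply, -finRotate_symm_apply]

/- Unit downward rotation of column j of the m x n Torus Puzzle. -/
def colRot (m n : ℕ) (j : Fin n) : Equiv.Perm (Fin m × Fin n) where
  toFun p := if p.2 = j then (finRotate m p.1, j) else p
  invFun p := if p.2 = j then ((finRotate m).symm p.1, j) else p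
  left_inv := by rintro ⟨a, b⟩; by_cases h : b = j <;> simp [h, -finRotate_apply, -finRotate_symm_apply]
  right_inv := by rintro ⟨a, b⟩; by_cases h : b = j <;> simp [h, -finRotate_apply, -finRotate_symm_apply]

/- The set S(m,n) of the m + n unit rotations. -/
def unitRotations (m n : ℕ) : Set (Equiv.Perm (Fin m × Fin n)) :=
  Set.range (rowRot m n) ∪ Set.range (colRot m n)

/- The group G(m,n) generated by the unit rotations. -/
def torusGroup (m n : ℕ) : Subgroup (Equiv.Perm (Fin m × Fin n)) :=
  Subgroup.closure (unitRotations m n)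

/- The set of compound rotations: nonzero powers of unit rotations. -/
def compoundRotations (m n : ℕ) : Set (Equiv.Perm (Fin m × Fin n)) :=
  {g | ∃ i : Fin m, ∃ k : ℕ, 1 ≤ k ∧ k ≤ n - 1 ∧ g = (rowRot m n i) ^ k} ∪
  {g | ∃ j : Fin n, ∃ k : ℕ, 1 ≤ k ∧ k ≤ m - 1 ∧ g = (colRot m n j) ^ k}

open Equiv Equiv.Perm

open Equiv Equiv.Perm

variable {α : Type*} [DecidableEq α]

/-- The 3-cycle a → b → c → a. -/
def cyc (a b c : α) : Equiv.Perm α := Equiv.swap a c * Equiv.swap a b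

theorem cyc_apply_a {a b c : α} (hab : a ≠ b) (hac : a ≠ c) (hbc : b ≠ c) :
    cyc a b c a = b := by
  simp [cyc, Equiv.swap_apply_of_ne_of_ne hab.symm hbc]

theorem cyc_apply_b {a b c : α} (hab : a ≠ b) (hac : a ≠ c) (hbc : b ≠ c) :
    cyc a b c b = c := by
  simp [cyc]

theorem cyc_apply_c {a b c : α} (hab : a ≠ b) (hac : a ≠ c) (hbc : b ≠ c) :
    cyc a b c c = a := by
  simp [cyc, Equiv.swap_apply_of_ne_of_ne hac.symm hbc.symm]

theorem cyc_apply_ne {a b c d : α} (hda : d ≠ a) (hdb : d ≠ b) (hdc : d ≠ c) :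
    cyc a b c d = d := by
  simp [cyc, Equiv.swap_apply_of_ne_of_ne hda hdb, Equiv.swap_apply_of_ne_of_ne hda hdc]

theorem cyc_inv (a b c : α) : (cyc a b c)⁻¹ = cyc a c b := by
  simp [cyc, mul_inv_rev]

theorem cyc_conj (σ : Equiv.Perm α) (a b c : α) :
    σ * cyc a b c * σ⁻¹ = cyc (σ a) (σ b) (σ c) := by
  rw [cyc, cyc, Equiv.swap_apply_apply σ a c, Equiv.swap_apply_apply σ a b]
  group

theorem cyc_rotate {a b c : α} (hab : a ≠ b) (hac : a ≠ c) (hbc : b ≠ c) :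
    cyc a b c = cyc b c a := by
  ext z
  by_cases hza : z = a
  · subst hza; rw [cyc_apply_a hab hac hbc, cyc_apply_c hbc hab.symm hac.symm]
  by_cases hzb : z = b
  · subst hzb; rw [cyc_apply_b hab hac hbc, cyc_apply_a hbc hab.symm hac.symm]
  by_cases hzc : z = c
  · subst hzc; rw [cyc_apply_c hab hac hbc, cyc_apply_b hbc hab.symm hac.symm]
  · rw [cyc_apply_ne hza hzb hzc, cyc_apply_ne hzb hzc hza]

theorem isThreeCycle_exists_cyc {σ : Equiv.Perm α} [Fintype α] (h : σ.IsThreeCycle) :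
    ∃ p q r : α, p ≠ q ∧ p ≠ r ∧ q ≠ r ∧ σ = cyc p q r := by
  have h3 : σ.support.card = 3 := h.card_support
  have hne : σ.support.Nonempty := Finset.card_pos.mp (by omega)
  obtain ⟨p, hp⟩ := hne
  have hp' : σ p ≠ p := Equiv.Perm.mem_support.mp hp
  have h3' : σ ^ 3 = 1 := by
    rw [← h.orderOf]; exact pow_orderOf_eq_one σ
  have hσr : σ (σ (σ p)) = p := by
    have := Equiv.ext_iff.mp h3' p
    simpa [pow_succ, Equiv.Perm.mul_apply] using this
  have hpq : p ≠ σ p := fun e => hp' e.symm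
  have hpr : p ≠ σ (σ p) := fun e => hp' ((congrArg σ e).trans hσr)
  have hqr : σ p ≠ σ (σ p) := fun e => hp' (σ.injective e).symm
  refine ⟨p, σ p, σ (σ p), hpq, hpr, hqr, ?_⟩
  have hsub : ({p, σ p, σ (σ p)} : Finset α) ⊆ σ.support := by
    intro z hz
    simp only [Finset.mem_insert, Finset.mem_singleton] at hz
    rcases hz with rfl | rfl | rfl <;> rw [Equiv.Perm.mem_support]
    · exact hp'
    · exact fun e => hqr e.symm
    · rw [hσr]; exact hpr
  have hc : ({p, σ p, σ (σ p)} : Finset α).card = 3 := by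
    rw [Finset.card_insert_of_notMem (by simp [hpq, hpr]),
      Finset.card_insert_of_notMem (by simp [hqr]), Finset.card_singleton]
  have hsupp : ({p, σ p, σ (σ p)} : Finset α) = σ.support :=
    Finset.eq_of_subset_of_card_le hsub (by omega)
  ext z
  by_cases hz1 : z = p
  · subst hz1; rw [cyc_apply_a hpq hpr hqr]
  by_cases hz2 : z = σ p
  · subst hz2; rw [cyc_apply_b hpq hpr hqr]
  by_cases hz3 : z = σ (σ p)
  · subst hz3; rw [cyc_apply_c hpq hpr hqr, hσr]
  · rw [cyc_apply_ne hz1 hz2 hz3]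
    have : z ∉ σ.support := by rw [← hsupp]; simp [hz1, hz2, hz3]
    exact Equiv.Perm.notMem_support.mp this


theorem card_le_of_words {α : Type*} [Fintype α] [DecidableEq α]
    (G : Subgroup (Equiv.Perm α)) (V : Finset (Equiv.Perm α)) (ℓ : ℕ)
    (h : ∀ g ∈ G, ∃ L : List (Equiv.Perm α),
      (∀ x ∈ L, x ∈ V) ∧ L.prod = g ∧ L.length = ℓ) :
    Nat.card G ≤ V.card ^ ℓ := by
  classical
  have hcard : Nat.card G = (Finset.univ.filter (· ∈ G)).card := by
    rw [Nat.card_eq_fintype_card, Fintype.card_subtype]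
  rw [hcard]
  have hsurj : Set.SurjOn (fun f : Fin ℓ → Equiv.Perm α => (List.ofFn f).prod)
      (Fintype.piFinset fun _ : Fin ℓ => V) (Finset.univ.filter (· ∈ G)) := by
    intro g hg
    simp only [Finset.coe_filter, Set.mem_setOf_eq] at hg
    obtain ⟨L, hLV, hLp, hLl⟩ := h g hg.2
    subst hLl
    refine ⟨L.get, ?_, ?_⟩
    · simp only [Finset.coe_sort_coe, Fintype.coe_piFinset, Set.mem_setOf_eq]
      intro i _
      exact hLV _ (List.get_mem L i)
    · simp [List.ofFn_get, hLp]
  have := Finset.card_le_card_of_surjOn _ hsurj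
  refine this.trans ?_
  rw [Fintype.card_piFinset]
  simp

section Dev
variable (m n : ℕ)

theorem rowRot_apply (i : Fin m) (a : Fin m) (b : Fin n) :
    rowRot m n i (a, b) = if a = i then (i, finRotate n b) else (a, b) := rfl

theorem colRot_apply (j : Fin n) (a : Fin m) (b : Fin n) :
    colRot m n j (a, b) = if b = j then (finRotate m a, j) else (a, b) := rfl

theorem rowRot_mem (i : Fin m) : rowRot m n i ∈ torusGroup m n :=
  Subgroup.subset_closure (Or.inl ⟨i, rfl⟩)

theorem colRot_mem (j : Fin n) : colRot m n j ∈ torusGroup m n :=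
  Subgroup.subset_closure (Or.inr ⟨j, rfl⟩)

theorem listProd_rowRot_apply (l : List (Fin m)) (hl : l.Nodup) (a : Fin m) (b : Fin n) :
    (l.map (rowRot m n)).prod (a, b) = if a ∈ l then (a, finRotate n b) else (a, b) := by
  induction l with
  | nil => simp
  | cons h tl ih =>
    rw [List.nodup_cons] at hl
    rw [List.map_cons, List.prod_cons, Equiv.Perm.mul_apply, ih hl.2]
    by_cases hmem : a ∈ tl
    · have hne : a ≠ h := fun e => hl.1 (e ▸ hmem)
      simp [hmem, hne, rowRot_apply]
    · by_cases hah : a = h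
      · subst hah
        simp [hmem, rowRot_apply]
      · simp [hmem, hah, rowRot_apply]

/-- All-rows rotation. -/
def allRows : Equiv.Perm (Fin m × Fin n) := (List.ofFn (rowRot m n)).prod

theorem allRows_apply (a : Fin m) (b : Fin n) : allRows m n (a, b) = (a, finRotate n b) := by
  rw [allRows, List.ofFn_eq_map, listProd_rowRot_apply _ _ _ (List.nodup_finRange m)]
  simp [List.mem_finRange]

theorem allRows_mem : allRows m n ∈ torusGroup m n := by
  apply Subgroup.list_prod_mem
  intro x hx
  obtain ⟨i, rfl⟩ := List.mem_ofFn.mp hx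
  exact rowRot_mem m n i

end Dev

section Dev2
variable (m n : ℕ)

/-- The big (m+2)(n+2)-cycle traversing the torus in row-major order. -/
def bigCyc : Equiv.Perm (Fin (m + 2) × Fin (n + 2)) :=
  colRot (m + 2) (n + 2) 0 * allRows (m + 2) (n + 2)

theorem bigCyc_mem : bigCyc m n ∈ torusGroup (m + 2) (n + 2) :=
  Subgroup.mul_mem _ (colRot_mem _ _ 0) (allRows_mem _ _)

theorem finRotate_val (k : ℕ) (b : Fin (k + 2)) :
    ((finRotate (k + 2) b : Fin (k + 2)) : ℕ) = if (b : ℕ) + 1 < k + 2 then (b : ℕ) + 1 else 0 := by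
  rw [finRotate_succ_apply, Fin.val_add_one]
  by_cases hb : b = Fin.last (k + 1)
  · have hv : (b : ℕ) = k + 1 := by rw [hb]; rfl
    rw [if_pos hb, if_neg (by omega)]
  · have hv : (b : ℕ) < k + 1 :=
      lt_of_le_of_ne (Nat.lt_succ_iff.mp b.isLt) (fun e => hb (Fin.ext e))
    rw [if_neg hb, if_pos (by omega)]

theorem bigCyc_apply1 (a : Fin (m + 2)) (b : Fin (n + 2)) (h : (b : ℕ) + 1 < n + 2) :
    bigCyc m n (a, b) = (a, ⟨(b : ℕ) + 1, h⟩) := by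
  rw [bigCyc, Equiv.Perm.mul_apply, allRows_apply, colRot_apply]
  have hv := finRotate_val n b
  rw [if_pos h] at hv
  have : finRotate (n + 2) b ≠ 0 := by
    intro e; rw [e] at hv; simp at hv
  rw [if_neg this]
  exact Prod.ext rfl (Fin.ext hv)

theorem bigCyc_apply2 (a : Fin (m + 2)) (b : Fin (n + 2)) (hb : (b : ℕ) = n + 1) :
    bigCyc m n (a, b) = (finRotate (m + 2) a, 0) := by
  rw [bigCyc, Equiv.Perm.mul_apply, allRows_apply, colRot_apply]
  have hv := finRotate_val n b
  rw [if_neg (by omega)] at hv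
  rw [if_pos (Fin.ext hv)]

/-- Orbit of (0,0) under the big cycle. -/
def xSeq (m n : ℕ) (k : ℕ) : Fin (m + 2) × Fin (n + 2) := (bigCyc m n ^ k) (0, 0)

section Dev3
variable (m n : ℕ)

theorem xSeq_succ (k : ℕ) : xSeq m n (k + 1) = bigCyc m n (xSeq m n k) := by
  rw [xSeq, xSeq, pow_succ', Equiv.Perm.mul_apply]

theorem xSeq_add (a b : ℕ) : (bigCyc m n ^ a) (xSeq m n b) = xSeq m n (a + b) := by
  rw [xSeq, xSeq, ← Equiv.Perm.mul_apply, ← pow_add]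

theorem xSeq_row (s i : ℕ) (hi : i < m + 2) (hs : xSeq m n s = (⟨i, hi⟩, 0)) :
    ∀ j, (hj : j < n + 2) → xSeq m n (s + j) = (⟨i, hi⟩, ⟨j, hj⟩) := by
  intro j
  induction j with
  | zero => intro hj; simpa using hs
  | succ j ih =>
    intro hj
    have hj' : j < n + 2 := by omega
    rw [show s + (j + 1) = (s + j) + 1 by omega, xSeq_succ, ih hj',
      bigCyc_apply1 m n _ _ (by simpa using hj)]

theorem xSeq_formula : ∀ i, (hi : i < m + 2) → ∀ j, (hj : j < n + 2) →
    xSeq m n ((n + 2) * i + j) = (⟨i, hi⟩, ⟨j, hj⟩) := by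
  intro i
  induction i with
  | zero =>
    intro hi j hj
    have h0 : xSeq m n 0 = (⟨0, hi⟩, 0) := by
      simp only [xSeq, pow_zero]
      rfl
    simpa using xSeq_row m n 0 0 hi h0 j hj
  | succ i ih =>
    intro hi j hj
    have hi' : i < m + 2 := by omega
    have hrow := ih hi' (n + 1) (by omega)
    have hnext : xSeq m n ((n + 2) * (i + 1)) = (⟨i + 1, hi⟩, 0) := by
      rw [show (n + 2) * (i + 1) = ((n + 2) * i + (n + 1)) + 1 by ring, xSeq_succ, hrow,
        bigCyc_apply2 m n _ _ (by simp)]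
      congr 1
      apply Fin.ext
      rw [finRotate_val, if_pos (by simpa using hi)]
    exact xSeq_row m n _ _ hi hnext j hj

theorem xSeq_surj (p : Fin (m + 2) × Fin (n + 2)) :
    ∃ k, k < (m + 2) * (n + 2) ∧ xSeq m n k = p := by
  obtain ⟨⟨a, ha⟩, ⟨b, hb⟩⟩ := p
  refine ⟨(n + 2) * a + b, ?_, xSeq_formula m n a ha b hb⟩
  calc (n + 2) * a + b < (n + 2) * a + (n + 2) := by omega
    _ = (n + 2) * (a + 1) := by ring
    _ ≤ (n + 2) * (m + 2) := Nat.mul_le_mul_left _ (by omega)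
    _ = (m + 2) * (n + 2) := by ring

theorem xSeq_inj (k k' : ℕ) (hk : k < (m + 2) * (n + 2)) (hk' : k' < (m + 2) * (n + 2))
    (h : xSeq m n k = xSeq m n k') : k = k' := by
  have e1 : (n + 2) * (k / (n + 2)) + k % (n + 2) = k := Nat.div_add_mod k (n + 2)
  have e2 : (n + 2) * (k' / (n + 2)) + k' % (n + 2) = k' := Nat.div_add_mod k' (n + 2)
  have d1 : k / (n + 2) < m + 2 := Nat.div_lt_of_lt_mul (by rw [mul_comm]; exact hk)
  have d2 : k' / (n + 2) < m + 2 := Nat.div_lt_of_lt_mul (by rw [mul_comm]; exact hk')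
  have m1 : k % (n + 2) < n + 2 := Nat.mod_lt _ (by omega)
  have m2 : k' % (n + 2) < n + 2 := Nat.mod_lt _ (by omega)
  rw [← e1, ← e2, xSeq_formula m n _ d1 _ m1, xSeq_formula m n _ d2 _ m2] at h
  simp only [Prod.mk.injEq, Fin.mk.injEq] at h
  obtain ⟨hA, hB⟩ := h
  rw [hA, hB] at e1
  omega

theorem xSeq_N : xSeq m n ((m + 2) * (n + 2)) = (0, 0) := by
  have hrow := xSeq_formula m n (m + 1) (by omega) (n + 1) (by omega)
  rw [show (m + 2) * (n + 2) = ((n + 2) * (m + 1) + (n + 1)) + 1 by ring, xSeq_succ, hrow,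
    bigCyc_apply2 m n _ _ (by simp)]
  have : finRotate (m + 2) ⟨m + 1, by omega⟩ = (0 : Fin (m + 2)) := by
    apply Fin.ext
    rw [finRotate_val, if_neg (by simp)]
    rfl
  rw [this]

theorem bigCyc_pow_N : bigCyc m n ^ ((m + 2) * (n + 2)) = 1 := by
  apply Equiv.ext
  intro p
  obtain ⟨k, hk, rfl⟩ := xSeq_surj m n p
  rw [Equiv.Perm.one_apply, xSeq_add, add_comm ((m + 2) * (n + 2)) k,
    ← xSeq_add m n k ((m + 2) * (n + 2)), xSeq_N]
  rfl

theorem xSeq_per (k : ℕ) : xSeq m n (k + (m + 2) * (n + 2)) = xSeq m n k := by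
  rw [← xSeq_add, xSeq_N]
  rfl

theorem xSeq_mod (k : ℕ) : xSeq m n (k % ((m + 2) * (n + 2))) = xSeq m n k := by
  induction k using Nat.strong_induction_on with
  | _ k ih =>
    by_cases h : k < (m + 2) * (n + 2)
    · rw [Nat.mod_eq_of_lt h]
    · push_neg at h
      have e : k = (k - (m + 2) * (n + 2)) + (m + 2) * (n + 2) := by omega
      rw [Nat.mod_eq_sub_mod h,
        ih (k - (m + 2) * (n + 2))
          (by have h2 : 0 < (m + 2) * (n + 2) := Nat.mul_pos (by omega) (by omega); omega)]
      conv_rhs => rw [e]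
      rw [xSeq_per]

theorem xSeq_congr (a b : ℕ) (h : a % ((m + 2) * (n + 2)) = b % ((m + 2) * (n + 2))) :
    xSeq m n a = xSeq m n b := by
  rw [← xSeq_mod m n a, ← xSeq_mod m n b, h]

theorem xSeq_ne (k k' : ℕ) (hk : k < (m + 2) * (n + 2)) (hk' : k' < (m + 2) * (n + 2))
    (h : k ≠ k') : xSeq m n k ≠ xSeq m n k' :=
  fun e => h (xSeq_inj m n k k' hk hk' e)

end Dev3

section Dev4
variable (m n : ℕ)

theorem finRotate_zero_val (k : ℕ) : finRotate (k + 2) 0 = 1 := by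
  apply Fin.ext
  rw [finRotate_val]
  simp

theorem finRotate_eq_zero_iff (k : ℕ) (b : Fin (k + 2)) :
    finRotate (k + 2) b = 0 ↔ (b : ℕ) = k + 1 := by
  rw [Fin.ext_iff, finRotate_val]
  constructor
  · intro h
    split_ifs at h with h1
    · simp at h
    · have := b.isLt; omega
  · intro h
    rw [if_neg (by omega)]
    rfl

theorem finRotate_eq_one_iff (k : ℕ) (b : Fin (k + 2)) :
    finRotate (k + 2) b = 1 ↔ b = 0 := by
  constructor
  · intro h
    apply (finRotate (k + 2)).injective
    rw [h, finRotate_zero_val]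
  · rintro rfl
    exact finRotate_zero_val k

theorem tBase_identity :
    cyc ((0 : Fin (m + 2)), (0 : Fin (n + 2))) (0, 1) (1, 0) *
        (colRot (m + 2) (n + 2) 0 * rowRot (m + 2) (n + 2) 0) =
      rowRot (m + 2) (n + 2) 0 * colRot (m + 2) (n + 2) 0 := by
  have h01n : (0 : Fin (n + 2)) ≠ 1 := by simp [Fin.ext_iff]
  have h01m : (0 : Fin (m + 2)) ≠ 1 := by simp [Fin.ext_iff]
  have d12 : ((0 : Fin (m + 2)), (0 : Fin (n + 2))) ≠ (0, 1) := by
    simp [Prod.ext_iff, h01n]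
  have d13 : ((0 : Fin (m + 2)), (0 : Fin (n + 2))) ≠ (1, 0) := by
    simp [Prod.ext_iff, h01m]
  have d23 : ((0 : Fin (m + 2)), (1 : Fin (n + 2))) ≠ (1, 0) := by
    simp [Prod.ext_iff, h01m]
  have hρ00 : rowRot (m + 2) (n + 2) 0 (0, 0) = ((0 : Fin (m + 2)), (1 : Fin (n + 2))) := by
    rw [rowRot_apply, if_pos rfl, finRotate_zero_val]
  have hγ00 : colRot (m + 2) (n + 2) 0 (0, 0) = ((1 : Fin (m + 2)), (0 : Fin (n + 2))) := by
    rw [colRot_apply, if_pos rfl, finRotate_zero_val]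
  apply Equiv.ext
  rintro ⟨a, b⟩
  simp only [Equiv.Perm.mul_apply]
  by_cases ha : a = 0
  · subst ha
    by_cases hb : b = 0
    · subst hb
      rw [hρ00, show colRot (m + 2) (n + 2) 0 ((0 : Fin (m + 2)), (1 : Fin (n + 2))) = (0, 1) by
          rw [colRot_apply, if_neg h01n.symm],
        hγ00, show rowRot (m + 2) (n + 2) 0 ((1 : Fin (m + 2)), (0 : Fin (n + 2))) = (1, 0) by
          rw [rowRot_apply, if_neg h01m.symm],
        cyc_apply_b d12 d13 d23]
    · have hγb : colRot (m + 2) (n + 2) 0 ((0 : Fin (m + 2)), b) = (0, b) := by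
        rw [colRot_apply, if_neg hb]
      have hρb : rowRot (m + 2) (n + 2) 0 ((0 : Fin (m + 2)), b) = (0, finRotate (n + 2) b) := by
        rw [rowRot_apply, if_pos rfl]
      by_cases hbl : (b : ℕ) = n + 1
      · have hfr : finRotate (n + 2) b = 0 := (finRotate_eq_zero_iff n b).mpr hbl
        rw [hγb, hρb, hfr, hγ00, cyc_apply_c d12 d13 d23]
      · have hfr : finRotate (n + 2) b ≠ 0 := fun e => hbl ((finRotate_eq_zero_iff n b).mp e)
        have hfr1 : finRotate (n + 2) b ≠ 1 := fun e => hb ((finRotate_eq_one_iff n b).mp e)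
        have hγ' : colRot (m + 2) (n + 2) 0 ((0 : Fin (m + 2)), finRotate (n + 2) b) =
            (0, finRotate (n + 2) b) := by rw [colRot_apply, if_neg hfr]
        rw [hγb, hρb, hγ', cyc_apply_ne (fun e => hfr (congrArg Prod.snd e))
          (fun e => hfr1 (congrArg Prod.snd e)) (fun e => h01m (congrArg Prod.fst e))]
  · have hρa : rowRot (m + 2) (n + 2) 0 (a, b) = (a, b) := by
      rw [rowRot_apply, if_neg ha]
    by_cases hb : b = 0
    · subst hb
      have hγa : colRot (m + 2) (n + 2) 0 (a, (0 : Fin (n + 2))) = (finRotate (m + 2) a, 0) := by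
        rw [colRot_apply, if_pos rfl]
      rw [hρa, hγa]
      by_cases hal : (a : ℕ) = m + 1
      · have hfr : finRotate (m + 2) a = 0 := (finRotate_eq_zero_iff m a).mpr hal
        rw [hfr, hρ00, cyc_apply_a d12 d13 d23]
      · have hfr : finRotate (m + 2) a ≠ 0 := fun e => hal ((finRotate_eq_zero_iff m a).mp e)
        have hfr1 : finRotate (m + 2) a ≠ 1 := fun e => ha ((finRotate_eq_one_iff m a).mp e)
        rw [show rowRot (m + 2) (n + 2) 0 (finRotate (m + 2) a, (0 : Fin (n + 2))) =
            (finRotate (m + 2) a, 0) by rw [rowRot_apply, if_neg hfr],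
          cyc_apply_ne (fun e => hfr (congrArg Prod.fst e))
            (fun e => hfr (congrArg Prod.fst e)) (fun e => hfr1 (congrArg Prod.fst e))]
    · have hγb : colRot (m + 2) (n + 2) 0 (a, b) = (a, b) := by
        rw [colRot_apply, if_neg hb]
      rw [hρa, hγb, hρa, cyc_apply_ne (fun e => ha (congrArg Prod.fst e))
        (fun e => ha (congrArg Prod.fst e)) (fun e => hb (congrArg Prod.snd e))]

theorem tBase_mem :
    cyc ((0 : Fin (m + 2)), (0 : Fin (n + 2))) (0, 1) (1, 0) ∈ torusGroup (m + 2) (n + 2) := by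
  have h := tBase_identity m n
  have e : cyc ((0 : Fin (m + 2)), (0 : Fin (n + 2))) (0, 1) (1, 0) =
      (rowRot (m + 2) (n + 2) 0 * colRot (m + 2) (n + 2) 0) *
        (colRot (m + 2) (n + 2) 0 * rowRot (m + 2) (n + 2) 0)⁻¹ := by
    rw [← h]; group
  rw [e]
  exact Subgroup.mul_mem _
    (Subgroup.mul_mem _ (rowRot_mem _ _ _) (colRot_mem _ _ _))
    (Subgroup.inv_mem _ (Subgroup.mul_mem _ (colRot_mem _ _ _) (rowRot_mem _ _ _)))

end Dev4

section Dev5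
variable (m n : ℕ)

theorem cyc_shift (k a b d : ℕ)
    (h : cyc (xSeq m n a) (xSeq m n b) (xSeq m n d) ∈ torusGroup (m + 2) (n + 2)) :
    cyc (xSeq m n (k + a)) (xSeq m n (k + b)) (xSeq m n (k + d)) ∈ torusGroup (m + 2) (n + 2) := by
  have hc : bigCyc m n ^ k ∈ torusGroup (m + 2) (n + 2) := pow_mem (bigCyc_mem m n) k
  have h2 := mul_mem (mul_mem hc h) (inv_mem hc)
  rwa [cyc_conj, xSeq_add, xSeq_add, xSeq_add] at h2

theorem tConsec (k : ℕ) :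
    cyc (xSeq m n k) (xSeq m n (k + 1)) (xSeq m n (k + (n + 2))) ∈ torusGroup (m + 2) (n + 2) := by
  have e0 : xSeq m n 0 = (0, 0) := by
    have := xSeq_formula m n 0 (by omega) 0 (by omega)
    simpa using this
  have e1 : xSeq m n 1 = (0, 1) := by
    have := xSeq_formula m n 0 (by omega) 1 (by omega)
    simpa using this
  have en : xSeq m n (n + 2) = (1, 0) := by
    have := xSeq_formula m n 1 (by omega) 0 (by omega)
    rw [show (n + 2) * 1 + 0 = n + 2 by ring] at this
    simpa using this
  have tB : cyc (xSeq m n 0) (xSeq m n 1) (xSeq m n (n + 2)) ∈ torusGroup (m + 2) (n + 2) := by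
    rw [e0, e1, en]; exact tBase_mem m n
  have := cyc_shift m n k 0 1 (n + 2) tB
  rwa [add_zero] at this

theorem ladder_v2 : cyc (xSeq m n 0) (xSeq m n 1) (xSeq m n 2) ∈ torusGroup (m + 2) (n + 2) := by
  have h2N : 2 * (n + 2) ≤ (m + 2) * (n + 2) := Nat.mul_le_mul_right _ (by omega)
  -- downward from n+2 to 2
  have step : ∀ j, 2 ≤ j → j + 1 ≤ n + 2 →
      cyc (xSeq m n 0) (xSeq m n 1) (xSeq m n (j + 1)) ∈ torusGroup (m + 2) (n + 2) →
      cyc (xSeq m n 0) (xSeq m n 1) (xSeq m n j) ∈ torusGroup (m + 2) (n + 2) := by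
    intro j hj2 hjn hprev
    have htj := tConsec m n j
    have hσ := inv_mem htj
    rw [cyc_inv] at hσ
    have hmem := mul_mem (mul_mem hσ hprev) (inv_mem hσ)
    rw [cyc_conj] at hmem
    have hd : ∀ a b : ℕ, a < (m + 2) * (n + 2) → b < (m + 2) * (n + 2) → a ≠ b →
        xSeq m n a ≠ xSeq m n b := xSeq_ne m n
    have hs0 : (cyc (xSeq m n j) (xSeq m n (j + (n + 2))) (xSeq m n (j + 1))) (xSeq m n 0)
        = xSeq m n 0 := cyc_apply_ne (hd 0 j (by omega) (by omega) (by omega))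
      (hd 0 (j + (n + 2)) (by omega) (by omega) (by omega))
      (hd 0 (j + 1) (by omega) (by omega) (by omega))
    have hs1 : (cyc (xSeq m n j) (xSeq m n (j + (n + 2))) (xSeq m n (j + 1))) (xSeq m n 1)
        = xSeq m n 1 := cyc_apply_ne (hd 1 j (by omega) (by omega) (by omega))
      (hd 1 (j + (n + 2)) (by omega) (by omega) (by omega))
      (hd 1 (j + 1) (by omega) (by omega) (by omega))
    have hsj : (cyc (xSeq m n j) (xSeq m n (j + (n + 2))) (xSeq m n (j + 1))) (xSeq m n (j + 1))
        = xSeq m n j := cyc_apply_c (hd j (j + (n + 2)) (by omega) (by omega) (by omega))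
      (hd j (j + 1) (by omega) (by omega) (by omega))
      (hd (j + (n + 2)) (j + 1) (by omega) (by omega) (by omega))
    rwa [hs0, hs1, hsj] at hmem
  have claim : ∀ d, d ≤ n → cyc (xSeq m n 0) (xSeq m n 1) (xSeq m n (n + 2 - d)) ∈
      torusGroup (m + 2) (n + 2) := by
    intro d
    induction d with
    | zero =>
      intro _
      have := tConsec m n 0
      rw [zero_add, zero_add] at this
      simpa using this
    | succ d ih =>
      intro hd
      have hprev := ih (by omega)
      have := step (n + 2 - (d + 1)) (by omega) (by omega)
        (by rw [show n + 2 - (d + 1) + 1 = n + 2 - d by omega]; exact hprev)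
      exact this
  have := claim n (le_refl n)
  rwa [show n + 2 - n = 2 by omega] at this

end Dev5

section Dev6
variable (m n : ℕ)

theorem ladder_v (j : ℕ) (hj2 : 2 ≤ j) (hjN : j < (m + 2) * (n + 2)) :
    cyc (xSeq m n 0) (xSeq m n 1) (xSeq m n j) ∈ torusGroup (m + 2) (n + 2) := by
  have h2N : 2 * (n + 2) ≤ (m + 2) * (n + 2) := Nat.mul_le_mul_right _ (by omega)
  have hd : ∀ a b : ℕ, a < (m + 2) * (n + 2) → b < (m + 2) * (n + 2) → a ≠ b →
      xSeq m n a ≠ xSeq m n b := xSeq_ne m n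
  -- upward induction for j ≤ N - 2
  have hup : ∀ j, 2 ≤ j → j + 2 ≤ (m + 2) * (n + 2) →
      cyc (xSeq m n 0) (xSeq m n 1) (xSeq m n j) ∈ torusGroup (m + 2) (n + 2) := by
    intro j hj
    induction j, hj using Nat.le_induction with
    | base => intro _; exact ladder_v2 m n
    | succ j hj ih =>
      intro hjN'
      have hprev := ih (by omega)
      have hσ : cyc (xSeq m n (j + 0)) (xSeq m n (j + 1)) (xSeq m n (j + 2)) ∈
          torusGroup (m + 2) (n + 2) := cyc_shift m n j 0 1 2 (ladder_v2 m n)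
      rw [add_zero] at hσ
      have hmem := mul_mem (mul_mem hσ hprev) (inv_mem hσ)
      rw [cyc_conj] at hmem
      have hs0 : (cyc (xSeq m n j) (xSeq m n (j + 1)) (xSeq m n (j + 2))) (xSeq m n 0)
          = xSeq m n 0 := cyc_apply_ne (hd 0 j (by omega) (by omega) (by omega))
        (hd 0 (j + 1) (by omega) (by omega) (by omega))
        (hd 0 (j + 2) (by omega) (by omega) (by omega))
      have hs1 : (cyc (xSeq m n j) (xSeq m n (j + 1)) (xSeq m n (j + 2))) (xSeq m n 1)
          = xSeq m n 1 := cyc_apply_ne (hd 1 j (by omega) (by omega) (by omega))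
        (hd 1 (j + 1) (by omega) (by omega) (by omega))
        (hd 1 (j + 2) (by omega) (by omega) (by omega))
      have hsj : (cyc (xSeq m n j) (xSeq m n (j + 1)) (xSeq m n (j + 2))) (xSeq m n j)
          = xSeq m n (j + 1) := cyc_apply_a (hd j (j + 1) (by omega) (by omega) (by omega))
        (hd j (j + 2) (by omega) (by omega) (by omega))
        (hd (j + 1) (j + 2) (by omega) (by omega) (by omega))
      rwa [hs0, hs1, hsj] at hmem
  by_cases htop : j + 2 ≤ (m + 2) * (n + 2)
  · exact hup j hj2 htop
  · -- j = N - 1 : conjugate v2 by c^j and use periodicity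
    have hjeq : j + 1 = (m + 2) * (n + 2) := by omega
    have hσ := cyc_shift m n j 0 1 2 (ladder_v2 m n)
    rw [add_zero] at hσ
    have e00 : xSeq m n 0 = (0, 0) := by
      have := xSeq_formula m n 0 (by omega) 0 (by omega)
      simpa using this
    have ej1 : xSeq m n (j + 1) = xSeq m n 0 := by
      rw [hjeq, xSeq_N m n, e00]
    have ej2 : xSeq m n (j + 2) = xSeq m n 1 := by
      have : j + 2 = 1 + (m + 2) * (n + 2) := by omega
      rw [this, xSeq_per]
    rw [ej1, ej2] at hσ
    rwa [cyc_rotate (hd j 0 (by omega) (by omega) (by omega))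
      (hd j 1 (by omega) (by omega) (by omega))
      (hd 0 1 (by omega) (by omega) (by omega))] at hσ

theorem ladder_W (i j : ℕ) (hi1 : 1 ≤ i) (hiN : i < (m + 2) * (n + 2))
    (hj1 : 1 ≤ j) (hjN : j < (m + 2) * (n + 2)) (hij : i ≠ j) :
    cyc (xSeq m n 0) (xSeq m n i) (xSeq m n j) ∈ torusGroup (m + 2) (n + 2) := by
  have h2N : 2 * (n + 2) ≤ (m + 2) * (n + 2) := Nat.mul_le_mul_right _ (by omega)
  have hd : ∀ a b : ℕ, a < (m + 2) * (n + 2) → b < (m + 2) * (n + 2) → a ≠ b →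
      xSeq m n a ≠ xSeq m n b := xSeq_ne m n
  by_cases hi : i = 1
  · subst hi
    exact ladder_v m n j (by omega) hjN
  by_cases hj : j = 1
  · subst hj
    rw [show cyc (xSeq m n 0) (xSeq m n i) (xSeq m n 1) =
        (cyc (xSeq m n 0) (xSeq m n 1) (xSeq m n i))⁻¹ from (cyc_inv _ _ _).symm]
    exact inv_mem (ladder_v m n i (by omega) hiN)
  · have hvj := ladder_v m n j (by omega) hjN
    have hvi := ladder_v m n i (by omega) hiN
    have hσ := inv_mem hvj
    rw [cyc_inv] at hσ
    have hmem := mul_mem (mul_mem hσ hvi) (inv_mem hσ)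
    rw [cyc_conj] at hmem
    have hs0 : (cyc (xSeq m n 0) (xSeq m n j) (xSeq m n 1)) (xSeq m n 0) = xSeq m n j :=
      cyc_apply_a (hd 0 j (by omega) (by omega) (by omega))
        (hd 0 1 (by omega) (by omega) (by omega))
        (hd j 1 (by omega) (by omega) (by omega))
    have hs1 : (cyc (xSeq m n 0) (xSeq m n j) (xSeq m n 1)) (xSeq m n 1) = xSeq m n 0 :=
      cyc_apply_c (hd 0 j (by omega) (by omega) (by omega))
        (hd 0 1 (by omega) (by omega) (by omega))
        (hd j 1 (by omega) (by omega) (by omega))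
    have hsi : (cyc (xSeq m n 0) (xSeq m n j) (xSeq m n 1)) (xSeq m n i) = xSeq m n i :=
      cyc_apply_ne (hd i 0 (by omega) (by omega) (by omega))
        (hd i j (by omega) (by omega) (by omega))
        (hd i 1 (by omega) (by omega) (by omega))
    rw [hs0, hs1, hsi] at hmem
    rwa [cyc_rotate (hd j 0 (by omega) (by omega) (by omega))
      (hd j i (by omega) (by omega) (by omega))
      (hd 0 i (by omega) (by omega) (by omega))] at hmem

end Dev6

section Dev7
variable (m n : ℕ)

theorem all_threeCycles_mem (p q r : Fin (m + 2) × Fin (n + 2))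
    (hpq : p ≠ q) (hpr : p ≠ r) (hqr : q ≠ r) :
    cyc p q r ∈ torusGroup (m + 2) (n + 2) := by
  have hN0 : 0 < (m + 2) * (n + 2) := Nat.mul_pos (by omega) (by omega)
  obtain ⟨a, haN, rfl⟩ := xSeq_surj m n p
  obtain ⟨b, hbN, rfl⟩ := xSeq_surj m n q
  obtain ⟨d, hdN, rfl⟩ := xSeq_surj m n r
  have hca : bigCyc m n ^ a ∈ torusGroup (m + 2) (n + 2) := pow_mem (bigCyc_mem m n) a
  have key : ∀ e : ℕ, (bigCyc m n ^ a) (xSeq m n ((e + ((m + 2) * (n + 2) - a)) %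
      ((m + 2) * (n + 2)))) = xSeq m n e := by
    intro e
    rw [xSeq_add]
    apply xSeq_congr
    have h1 : (e + ((m + 2) * (n + 2) - a)) % ((m + 2) * (n + 2)) ≡
        e + ((m + 2) * (n + 2) - a) [MOD (m + 2) * (n + 2)] := Nat.mod_modEq _ _
    have h2 := h1.add_left a
    have h3 : a + (e + ((m + 2) * (n + 2) - a)) = e + (m + 2) * (n + 2) := by omega
    rw [h3] at h2
    exact h2.trans (Nat.add_mod_right e _)
  have h0 : (bigCyc m n ^ a) (xSeq m n 0) = xSeq m n a := by
    rw [xSeq_add, add_zero]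
  set N := (m + 2) * (n + 2) with hN
  set i := (b + (N - a)) % N with hidef
  set j := (d + (N - a)) % N with hjdef
  have hiN : i < N := Nat.mod_lt _ hN0
  have hjN : j < N := Nat.mod_lt _ hN0
  have hxi : (bigCyc m n ^ a) (xSeq m n i) = xSeq m n b := key b
  have hxj : (bigCyc m n ^ a) (xSeq m n j) = xSeq m n d := key d
  have hi1 : 1 ≤ i := by
    rcases Nat.eq_zero_or_pos i with h | h
    · exfalso
      apply hpq
      rw [← h0, ← hxi, h]
    · exact h
  have hj1 : 1 ≤ j := by
    rcases Nat.eq_zero_or_pos j with h | h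
    · exfalso
      apply hpr
      rw [← h0, ← hxj, h]
    · exact h
  have hij : i ≠ j := by
    intro e
    apply hqr
    rw [← hxi, ← hxj, e]
  have hW := ladder_W m n i j hi1 hiN hj1 hjN hij
  have hmem := mul_mem (mul_mem hca hW) (inv_mem hca)
  rwa [cyc_conj, h0, hxi, hxj] at hmem

theorem alternating_le_torusGroup :
    alternatingGroup (Fin (m + 2) × Fin (n + 2)) ≤ torusGroup (m + 2) (n + 2) := by
  rw [← Equiv.Perm.closure_three_cycles_eq_alternating, Subgroup.closure_le]
  rintro σ hσ
  obtain ⟨p, q, r, h1, h2, h3, rfl⟩ := isThreeCycle_exists_cyc hσ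
  exact all_threeCycles_mem m n p q r h1 h2 h3

end Dev7

section Dev8

theorem factorial_le_torus_card (m n : ℕ) :
    Nat.factorial ((m + 2) * (n + 2)) ≤ 2 * Nat.card (torusGroup (m + 2) (n + 2)) := by
  have hle := Subgroup.card_le_of_le (alternating_le_torusGroup m n)
  have h2 : 2 * Nat.card (alternatingGroup (Fin (m + 2) × Fin (n + 2))) =
      Nat.factorial ((m + 2) * (n + 2)) := by
    rw [Nat.card_eq_fintype_card, two_mul_card_alternatingGroup, Fintype.card_perm,
      Fintype.card_prod, Fintype.card_fin, Fintype.card_fin]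
  omega

theorem compound_card_le (m n : ℕ) (hm : 2 ≤ m) (hn : 2 ≤ n) :
    (insert (1 : Equiv.Perm (Fin m × Fin n))
      (Set.toFinite (compoundRotations m n)).toFinset).card ≤ 2 * m * n := by
  classical
  have hsurj : Set.SurjOn
      (fun z : (Fin m × Fin n) ⊕ (Fin n × Fin m) =>
        Sum.elim (fun p => rowRot m n p.1 ^ (p.2 : ℕ)) (fun p => colRot m n p.1 ^ (p.2 : ℕ)) z)
      (Finset.univ : Finset ((Fin m × Fin n) ⊕ (Fin n × Fin m)))
      ((insert (1 : Equiv.Perm (Fin m × Fin n))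
        (Set.toFinite (compoundRotations m n)).toFinset : Finset _) : Set _) := by
    intro g hg
    simp only [Finset.coe_insert, Set.mem_insert_iff, Finset.mem_coe,
      Set.Finite.mem_toFinset] at hg
    rcases hg with rfl | hg
    · refine ⟨Sum.inl (⟨0, by omega⟩, ⟨0, by omega⟩), by simp, ?_⟩
      simp
    · rcases hg with ⟨i, k, hk1, hk2, rfl⟩ | ⟨j, k, hk1, hk2, rfl⟩
      · exact ⟨Sum.inl (i, ⟨k, by omega⟩), by simp, rfl⟩
      · exact ⟨Sum.inr (j, ⟨k, by omega⟩), by simp, rfl⟩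
  have hcard := Finset.card_le_card_of_surjOn _ hsurj
  refine hcard.trans ?_
  have huniv : (Finset.univ : Finset ((Fin m × Fin n) ⊕ (Fin n × Fin m))).card =
      m * n + n * m := by simp
  rw [huniv]
  have h : m * n + n * m = 2 * m * n := by ring
  omega

end Dev8

/- Lower bound on the drag number: some element of G(m,n) requires at least
log₂((mn)!/2) / log₂(2mn) - 1 compound rotations, which is Ω(mn). -/
theorem drag_number_lower_bound (m n : ℕ) (hm : 2 ≤ m) (hn : 2 ≤ n) :
    ∃ g ∈ torusGroup m n,
      ∀ L : List (Equiv.Perm (Fin m × Fin n)),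
        (∀ x ∈ L, x ∈ compoundRotations m n) → L.prod = g →
        Real.logb 2 ((Nat.factorial (m * n) : ℝ) / 2) / Real.logb 2 (2 * m * n) - 1 ≤
          (L.length : ℝ) := by
  classical
  obtain ⟨m', rfl⟩ : ∃ k, m = k + 2 := ⟨m - 2, by omega⟩
  obtain ⟨n', rfl⟩ : ∃ k, n = k + 2 := ⟨n - 2, by omega⟩
  set m : ℕ := m' + 2 with hmdef
  set n : ℕ := n' + 2 with hndef
  by_contra hcon
  push_neg at hcon
  set F : ℝ := ((Nat.factorial (m * n) : ℝ) / 2) with hF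
  set s : ℝ := 2 * (m : ℝ) * (n : ℝ) with hs
  set B : ℝ := Real.logb 2 F / Real.logb 2 s with hB
  have hm' : (2 : ℝ) ≤ (m : ℝ) := by exact_mod_cast hm
  have hn' : (2 : ℝ) ≤ (n : ℝ) := by exact_mod_cast hn
  have hs1 : 1 < s := by rw [hs]; nlinarith
  have hs0 : 0 < s := by linarith
  have hN4 : 4 ≤ m * n := by calc 4 = 2 * 2 := by norm_num
                                _ ≤ m * n := Nat.mul_le_mul hm hn
  have hF24 : (24 : ℝ) ≤ (Nat.factorial (m * n) : ℝ) := by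
    have h1 : Nat.factorial 4 ≤ Nat.factorial (m * n) := Nat.factorial_le hN4
    have h2 : Nat.factorial 4 = 24 := by decide
    exact_mod_cast h2 ▸ h1
  have hF1 : 1 < F := by rw [hF]; linarith
  have hF0 : 0 < F := by linarith
  have hlogs : 0 < Real.logb 2 s := Real.logb_pos one_lt_two hs1
  have hlogF : 0 < Real.logb 2 F := Real.logb_pos one_lt_two hF1
  have hB0 : 0 < B := div_pos hlogF hlogs
  set ℓ : ℕ := ⌈B⌉₊ - 1 with hℓ
  have hceil : 1 ≤ ⌈B⌉₊ := Nat.one_le_ceil_iff.mpr hB0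
  have hlB : (ℓ : ℝ) < B := by
    have h1 : (⌈B⌉₊ : ℝ) < B + 1 := Nat.ceil_lt_add_one hB0.le
    have h2 : ((⌈B⌉₊ - 1 : ℕ) : ℝ) = (⌈B⌉₊ : ℝ) - 1 := by
      rw [Nat.cast_sub hceil]; norm_num
    rw [hℓ, h2]
    linarith
  set V := insert (1 : Equiv.Perm (Fin m × Fin n))
    (Set.toFinite (compoundRotations m n)).toFinset with hV
  have hwords : ∀ g ∈ torusGroup m n, ∃ L : List (Equiv.Perm (Fin m × Fin n)),
      (∀ x ∈ L, x ∈ V) ∧ L.prod = g ∧ L.length = ℓ := by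
    intro g hg
    obtain ⟨L, hLmem, hLprod, hLlen⟩ := hcon g hg
    have hlenR : (L.length : ℝ) < B := by linarith
    have hlen : L.length ≤ ℓ := by
      have := Nat.lt_ceil.mpr hlenR
      omega
    refine ⟨L ++ List.replicate (ℓ - L.length) 1, ?_, ?_, ?_⟩
    · intro x hx
      rcases List.mem_append.mp hx with h | h
      · exact Finset.mem_insert_of_mem ((Set.Finite.mem_toFinset _).mpr (hLmem x h))
      · rw [List.eq_of_mem_replicate h]
        exact Finset.mem_insert_self _ _
    · rw [List.prod_append, List.prod_replicate, one_pow, mul_one, hLprod]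
    · rw [List.length_append, List.length_replicate]
      omega
  have hcount := card_le_of_words (torusGroup m n) V ℓ hwords
  have hVcard : V.card ≤ 2 * m * n := compound_card_le m n hm hn
  have hpow : Nat.card (torusGroup m n) ≤ (2 * m * n) ^ ℓ :=
    hcount.trans (Nat.pow_le_pow_left hVcard ℓ)
  have hfac : Nat.factorial (m * n) ≤ 2 * Nat.card (torusGroup m n) :=
    factorial_le_torus_card m' n'
  have hnat : Nat.factorial (m * n) ≤ 2 * (2 * m * n) ^ ℓ :=
    hfac.trans (Nat.mul_le_mul_left 2 hpow)
  have hchain : (Nat.factorial (m * n) : ℝ) ≤ 2 * (((2 * m * n) ^ ℓ : ℕ) : ℝ) := by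
    exact_mod_cast hnat
  have hcast : (((2 * m * n) ^ ℓ : ℕ) : ℝ) = s ^ (ℓ : ℕ) := by
    rw [hs]; push_cast; ring
  have hsB : s ^ B = F := by
    have hBeq : B = Real.logb s F := by
      rw [hB, Real.logb, Real.logb, Real.logb]
      have h2 : Real.log 2 ≠ 0 := ne_of_gt (Real.log_pos one_lt_two)
      field_simp
    rw [hBeq, Real.rpow_logb hs0 (ne_of_gt hs1) hF0]
  have hrp : s ^ ((ℓ : ℕ) : ℝ) < s ^ B := (Real.rpow_lt_rpow_left_iff hs1).mpr hlB
  have hfin : (((2 * m * n) ^ ℓ : ℕ) : ℝ) < F := by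
    rw [hcast, ← Real.rpow_natCast s ℓ, ← hsB]
    exact hrp
  have hcontra : (Nat.factorial (m * n) : ℝ) < 2 * F := by linarith
  rw [hF] at hcontra
  linarith
end Dev2
end

section
/- There exists a constant C > 0 such that for all integers m, n ≥ 2 with at least one of m and n even, and for every position (i, j) of the m × n Torus Puzzle, both the transposition swapping the horizontally adjacent positions (i, j) and (i, j + 1 mod n), and the transposition swapping the vertically adjacent positions (i, j) and (i + 1 mod m, j), can each be written as a product of at most C · m · n unit rotations. -/
open Fin.NatCast Fin.CommRing

namespace Torus

variable {M N : ℕ}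

lemma add_one_ne (u : Fin (M+2)) : u + 1 ≠ u := by
  intro h
  have : (1 : Fin (M+2)) = 0 := by
    have h' : u + 1 = u + 0 := by rw [add_zero]; exact h
    exact add_left_cancel h'
  simp at this

lemma ne_add_one (u : Fin (M+2)) : u ≠ u + 1 := (add_one_ne u).symm

lemma sub_one_ne (u : Fin (M+2)) : u - 1 ≠ u := by
  intro h
  have h' : u - 1 + 1 = u + 1 := by rw [h]
  rw [sub_add_cancel] at h'
  exact add_one_ne u h'.symm

lemma row_apply (i a : Fin (M+2)) (b : Fin (N+2)) :
    rowRot (M+2) (N+2) i (a, b) = if a = i then (i, b + 1) else (a, b) := by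
  by_cases h : a = i <;> simp [rowRot, h]

lemma col_apply (j b : Fin (N+2)) (a : Fin (M+2)) :
    colRot (M+2) (N+2) j (a, b) = if b = j then (a + 1, j) else (a, b) := by
  by_cases h : b = j <;> simp [colRot, h]

lemma row_pow_apply (i a : Fin (M+2)) (b : Fin (N+2)) (k : ℕ) :
    (rowRot (M+2) (N+2) i ^ k) (a, b) = if a = i then (i, b + (k : Fin (N+2))) else (a, b) := by
  induction k with
  | zero => by_cases h : a = i <;> simp [h]
  | succ k ih =>
      rw [pow_succ', Equiv.Perm.mul_apply, ih]
      by_cases h : a = i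
      · subst h
        rw [if_pos rfl, row_apply, if_pos rfl, if_pos rfl]
        have : b + (k : Fin (N+2)) + 1 = b + ((k+1 : ℕ) : Fin (N+2)) := by
          push_cast; ring
        rw [this]
      · rw [if_neg h, row_apply, if_neg h, if_neg h]

lemma col_pow_apply (j b : Fin (N+2)) (a : Fin (M+2)) (k : ℕ) :
    (colRot (M+2) (N+2) j ^ k) (a, b) = if b = j then (a + (k : Fin (M+2)), j) else (a, b) := by
  induction k with
  | zero => by_cases h : b = j <;> simp [h]
  | succ k ih =>
      rw [pow_succ', Equiv.Perm.mul_apply, ih]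
      by_cases h : b = j
      · subst h
        rw [if_pos rfl, col_apply, if_pos rfl, if_pos rfl]
        have : a + (k : Fin (M+2)) + 1 = a + ((k+1 : ℕ) : Fin (M+2)) := by
          push_cast; ring
        rw [this]
      · rw [if_neg h, col_apply, if_neg h, if_neg h]

lemma row_pow_n (i : Fin (M+2)) : (rowRot (M+2) (N+2) i) ^ (N+2) = 1 := by
  apply Equiv.ext
  rintro ⟨a, b⟩
  rw [row_pow_apply]
  by_cases h : a = i
  · subst h; simp
  · simp [h]

lemma cast_succ_self : ((M+1 : ℕ) : Fin (M+2)) = -1 := by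
  have h : ((M+1 : ℕ) : Fin (M+2)) + 1 = 0 := by
    rw [← Nat.cast_succ]; exact Fin.natCast_self _
  linear_combination h

lemma row_pow_top (i a : Fin (M+2)) (b : Fin (N+2)) :
    (rowRot (M+2) (N+2) i ^ (N+1)) (a, b) = if a = i then (i, b - 1) else (a, b) := by
  rw [row_pow_apply, cast_succ_self]
  norm_num [sub_eq_add_neg]

lemma col_pow_top (j b : Fin (N+2)) (a : Fin (M+2)) :
    (colRot (M+2) (N+2) j ^ (M+1)) (a, b) = if b = j then (a - 1, j) else (a, b) := by
  rw [col_pow_apply, cast_succ_self]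
  norm_num [sub_eq_add_neg]

lemma kappa (i : Fin (M+2)) (j : Fin (N+2)) :
    colRot (M+2) (N+2) j * rowRot (M+2) (N+2) i * colRot (M+2) (N+2) j ^ (M+1) *
      rowRot (M+2) (N+2) i ^ (N+1)
    = Equiv.swap (i+1, j) (i, j) * Equiv.swap (i+1, j) (i, j+1) := by
  apply Equiv.ext
  rintro ⟨a, b⟩
  simp only [Equiv.Perm.mul_apply, row_pow_top]
  by_cases ha : a = i <;> by_cases hb : b = j <;> by_cases ha1 : a = i + 1 <;>
    by_cases hb1 : b = j + 1 <;>
    simp_all [row_apply, col_apply, col_pow_top, Equiv.swap_apply_def, Prod.mk.injEq,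
      add_one_ne, ne_add_one, sub_one_ne, sub_eq_iff_eq_add, sub_add_cancel,
      add_sub_cancel_right]

section Main

variable (i : Fin (M+2)) (j : Fin (N+2))

/-- The star product of swaps through the anchor `(i+1, j)`. -/
def D (l : ℕ) : Equiv.Perm (Fin (M+2) × Fin (N+2)) :=
  ((List.range l).map (fun c => Equiv.swap (i+1, j) (i, j + (c : Fin (N+2))))).prod

lemma D_succ (l : ℕ) :
    D i j (l+1) = D i j l * Equiv.swap (i+1, j) (i, j + (l : Fin (N+2))) := by
  simp [D, List.range_succ]

lemma row_pow_fix (k : ℕ) : (rowRot (M+2) (N+2) i ^ k) (i+1, j) = (i+1, j) := by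
  rw [row_pow_apply, if_neg (add_one_ne i)]

lemma row_pow_P (k c : ℕ) :
    (rowRot (M+2) (N+2) i ^ k) (i, j + (c : Fin (N+2))) = (i, j + ((c + k : ℕ) : Fin (N+2))) := by
  rw [row_pow_apply, if_pos rfl]
  congr 1
  push_cast
  ring

lemma move (k c : ℕ) (t : Equiv.Perm (Fin (M+2) × Fin (N+2))) :
    rowRot (M+2) (N+2) i ^ k * (Equiv.swap (i+1, j) (i, j + (c : Fin (N+2))) * t)
    = Equiv.swap (i+1, j) (i, j + ((c + k : ℕ) : Fin (N+2))) * (rowRot (M+2) (N+2) i ^ k * t) := by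
  have h := Equiv.swap_apply_apply (rowRot (M+2) (N+2) i ^ k) (i+1, j) (i, j + (c : Fin (N+2)))
  rw [row_pow_fix, row_pow_P] at h
  rw [h]
  group

lemma block_eq :
    colRot (M+2) (N+2) j * rowRot (M+2) (N+2) i * colRot (M+2) (N+2) j ^ (M+1) *
      rowRot (M+2) (N+2) i
    = Equiv.swap (i+1, j) (i, j + ((0:ℕ) : Fin (N+2))) *
      (Equiv.swap (i+1, j) (i, j + ((1:ℕ) : Fin (N+2))) * rowRot (M+2) (N+2) i ^ 2) := by
  have h1 : rowRot (M+2) (N+2) i ^ (N+1) * rowRot (M+2) (N+2) i ^ 2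
      = rowRot (M+2) (N+2) i := by
    rw [← pow_add]
    show rowRot (M+2) (N+2) i ^ (N+2+1) = _
    rw [pow_succ, row_pow_n, one_mul]
  have h2 := kappa i j
  calc colRot (M+2) (N+2) j * rowRot (M+2) (N+2) i * colRot (M+2) (N+2) j ^ (M+1) *
      rowRot (M+2) (N+2) i
      = colRot (M+2) (N+2) j * rowRot (M+2) (N+2) i * colRot (M+2) (N+2) j ^ (M+1) *
        rowRot (M+2) (N+2) i ^ (N+1) * rowRot (M+2) (N+2) i ^ 2 := by
        rw [mul_assoc _ _ (rowRot (M+2) (N+2) i ^ 2), h1]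
    _ = Equiv.swap (i+1, j) (i, j) * Equiv.swap (i+1, j) (i, j+1) *
        rowRot (M+2) (N+2) i ^ 2 := by rw [h2]
    _ = _ := by
        have e0 : ((0:ℕ) : Fin (N+2)) = 0 := by norm_num
        have e1 : ((1:ℕ) : Fin (N+2)) = 1 := by norm_num
        rw [e0, e1, add_zero, mul_assoc]

lemma pow_block (k : ℕ) :
    (colRot (M+2) (N+2) j * rowRot (M+2) (N+2) i * colRot (M+2) (N+2) j ^ (M+1) *
      rowRot (M+2) (N+2) i) ^ k
    = D i j (2*k) * rowRot (M+2) (N+2) i ^ (2*k) := by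
  induction k with
  | zero => simp [D]
  | succ k ih =>
      rw [pow_succ, ih, block_eq]
      rw [mul_assoc (D i j (2*k)), move, move]
      rw [← pow_add]
      have : D i j (2*k) * (Equiv.swap (i+1, j) (i, j + ((0 + 2*k : ℕ) : Fin (N+2))) *
          (Equiv.swap (i+1, j) (i, j + ((1 + 2*k : ℕ) : Fin (N+2))) *
            rowRot (M+2) (N+2) i ^ (2*k+2)))
          = (D i j (2*k) * Equiv.swap (i+1, j) (i, j + ((2*k : ℕ) : Fin (N+2))) *
              Equiv.swap (i+1, j) (i, j + ((2*k+1 : ℕ) : Fin (N+2)))) *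
            rowRot (M+2) (N+2) i ^ (2*k+2) := by
        rw [show (0 + 2*k) = 2*k from by omega, show (1 + 2*k) = 2*k+1 from by omega]
        group
      rw [this, ← D_succ, ← D_succ, show 2*(k+1) = 2*k+1+1 from by omega,
        show (2*k+2 : ℕ) = 2*k+1+1 from by omega]
      
lemma cast_val_of_lt {l : ℕ} (hl : l < N+2) : ((l : Fin (N+2))).val = l := by
  rw [Fin.val_natCast]; exact Nat.mod_eq_of_lt hl

lemma cast_pred {l : ℕ} (hl : 1 ≤ l) :
    (((l-1 : ℕ)) : Fin (N+2)) = ((l : ℕ) : Fin (N+2)) - 1 := by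
  have : ((l-1 : ℕ) : Fin (N+2)) + 1 = ((l : ℕ) : Fin (N+2)) := by
    rw [← Nat.cast_succ]
    congr 1
    omega
  rw [← this, add_sub_cancel_right]

lemma D_eval : ∀ (l : ℕ), l ≤ N+2 → ∀ (a : Fin (M+2)) (b : Fin (N+2)),
    D i j l (a, b) =
      if a = i then
        (if (b - j).val < l then (if b = j then (i+1, j) else (i, b - 1)) else (a, b))
      else if a = i+1 ∧ b = j ∧ 1 ≤ l then (i, j + ((l-1 : ℕ) : Fin (N+2))) else (a, b) := by
  intro l
  induction l with
  | zero =>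
      intro _ a b
      by_cases ha : a = i <;> simp [D, ha]
  | succ l ih =>
      intro hl a b
      have hlN : l < N+2 := by omega
      have hval : ((l : Fin (N+2))).val = l := cast_val_of_lt hlN
      rw [D_succ, Equiv.Perm.mul_apply]
      by_cases ha : a = i
      · subst ha
        by_cases hbl : b = j + (l : Fin (N+2))
        · subst hbl
          rw [Equiv.swap_apply_right, ih (by omega), if_neg (add_one_ne a), if_pos rfl,
            add_sub_cancel_left, hval, if_pos (show l < l + 1 by omega)]
          rcases Nat.eq_zero_or_pos l with h0 | h1
          · subst h0
            simp
          · rw [if_pos ⟨rfl, rfl, h1⟩,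
              if_neg (fun hh : j + (l : Fin (N+2)) = j => by
                have hv := congrArg (fun u => (u - j).val) hh
                simp only [add_sub_cancel_left, sub_self] at hv
                rw [hval] at hv
                simp at hv
                omega),
              cast_pred h1, add_sub_assoc]
        · rw [Equiv.swap_apply_of_ne_of_ne (by simp [Prod.ext_iff, ne_add_one])
              (by simp [Prod.ext_iff, hbl]),
            ih (by omega), if_pos rfl, if_pos rfl]
          have hne : (b - j).val ≠ l := by
            intro hh
            apply hbl
            have hbj : b - j = (l : Fin (N+2)) := Fin.ext (by rw [hval]; exact hh)
            calc b = j + (b - j) := by ring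
              _ = j + (l : Fin (N+2)) := by rw [hbj]
          have hiff : ((b - j).val < l + 1) ↔ ((b - j).val < l) := by omega
          simp only [hiff]
      · by_cases hx : a = i+1 ∧ b = j
        · obtain ⟨ha1, hbj⟩ := hx
          subst ha1; subst hbj
          rw [Equiv.swap_apply_left, ih (by omega), if_pos rfl, add_sub_cancel_left, hval,
            if_neg (lt_irrefl l)]
          rw [if_neg ha, if_pos ⟨rfl, rfl, by omega⟩, Nat.add_sub_cancel]
        · rw [Equiv.swap_apply_of_ne_of_ne
              (by simp only [Ne, Prod.ext_iff, not_and]; intro h1 h2; exact hx ⟨h1, h2⟩)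
              (by simp [Prod.ext_iff, ha]),
            ih (by omega), if_neg ha, if_neg ha,
            if_neg (fun hh => hx ⟨hh.1, hh.2.1⟩), if_neg (fun hh => hx ⟨hh.1, hh.2.1⟩)]

lemma vswap (r : ℕ) (hr : 2*r = N+2) :
    rowRot (M+2) (N+2) i *
      (colRot (M+2) (N+2) j * rowRot (M+2) (N+2) i * colRot (M+2) (N+2) j ^ (M+1) *
        rowRot (M+2) (N+2) i) ^ r
    = Equiv.swap (i, j) (i+1, j) := by
  rw [pow_block, hr, row_pow_n, mul_one]
  apply Equiv.ext
  rintro ⟨a, b⟩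
  rw [Equiv.Perm.mul_apply, D_eval i j (N+2) le_rfl]
  by_cases ha : a = i
  · subst ha
    rw [if_pos rfl, if_pos (b - j).isLt]
    by_cases hb : b = j
    · subst hb
      rw [if_pos rfl, row_apply, if_neg (add_one_ne a), Equiv.swap_apply_left]
    · rw [if_neg hb, row_apply, if_pos rfl, sub_add_cancel,
        Equiv.swap_apply_of_ne_of_ne (by simp [Prod.ext_iff, hb])
          (by simp [Prod.ext_iff, ne_add_one])]
  · rw [if_neg ha]
    by_cases hx : a = i+1 ∧ b = j
    · obtain ⟨h1, h2⟩ := hx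
      rw [h1, h2, if_pos ⟨rfl, rfl, by omega⟩, row_apply, if_pos rfl]
      have : j + (((N+2-1 : ℕ)) : Fin (N+2)) + 1 = j := by
        show j + ((N+1 : ℕ) : Fin (N+2)) + 1 = j
        rw [cast_succ_self]
        ring
      rw [this, Equiv.swap_apply_right]
    · rw [if_neg (fun hh => hx ⟨hh.1, hh.2.1⟩), row_apply, if_neg ha,
        Equiv.swap_apply_of_ne_of_ne (by simp [Prod.ext_iff, ha])
          (by simp only [Ne, Prod.ext_iff, not_and]; intro h1 h2; exact hx ⟨h1, h2⟩)]

lemma hswap (r : ℕ) (hr : 2*r = N+2) :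
    colRot (M+2) (N+2) j * rowRot (M+2) (N+2) i * colRot (M+2) (N+2) j ^ (M+1) *
      rowRot (M+2) (N+2) i ^ (N+1) *
      (rowRot (M+2) (N+2) i *
        (colRot (M+2) (N+2) j * rowRot (M+2) (N+2) i * colRot (M+2) (N+2) j ^ (M+1) *
          rowRot (M+2) (N+2) i) ^ r)
    = Equiv.swap (i, j) (i, j+1) := by
  rw [vswap i j r hr, kappa]
  have hc : Equiv.swap (i, j) (i+1, j) = Equiv.swap (i+1, j) ((i, j) : Fin (M+2) × Fin (N+2)) :=
    Equiv.swap_comm _ _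
  rw [hc]
  have h := Equiv.swap_apply_apply (Equiv.swap (i+1, j) ((i, j) : Fin (M+2) × Fin (N+2)))
    (i+1, j) (i, j+1)
  rw [Equiv.swap_apply_left, Equiv.swap_inv,
    Equiv.swap_apply_of_ne_of_ne (by simp [Prod.ext_iff, ne_add_one])
      (by simp [Prod.ext_iff, ne_add_one])] at h
  exact h.symm

end Main

section Words

variable {M N : ℕ} (i : Fin (M+2)) (j : Fin (N+2))

/-- The basic block word. -/
def Lblk : List (Equiv.Perm (Fin (M+2) × Fin (N+2))) :=
  colRot (M+2) (N+2) j :: rowRot (M+2) (N+2) i ::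
    (List.replicate (M+1) (colRot (M+2) (N+2) j) ++ [rowRot (M+2) (N+2) i])

/-- Word for the vertical swap. -/
def Lv (r : ℕ) : List (Equiv.Perm (Fin (M+2) × Fin (N+2))) :=
  rowRot (M+2) (N+2) i :: (List.replicate r (Lblk i j)).flatten

/-- Word for the horizontal swap. -/
def Lh (r : ℕ) : List (Equiv.Perm (Fin (M+2) × Fin (N+2))) :=
  colRot (M+2) (N+2) j :: rowRot (M+2) (N+2) i ::
    (List.replicate (M+1) (colRot (M+2) (N+2) j) ++
      (List.replicate (N+1) (rowRot (M+2) (N+2) i) ++ Lv i j r))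

lemma Lblk_prod :
    (Lblk i j).prod = colRot (M+2) (N+2) j * rowRot (M+2) (N+2) i *
      colRot (M+2) (N+2) j ^ (M+1) * rowRot (M+2) (N+2) i := by
  simp [Lblk, mul_assoc]

lemma Lv_prod (r : ℕ) (hr : 2*r = N+2) :
    (Lv i j r).prod = Equiv.swap (i, j) (i+1, j) := by
  have : ((List.replicate r (Lblk i j)).flatten).prod = ((Lblk i j).prod) ^ r := by
    rw [List.prod_flatten, List.map_replicate, List.prod_replicate]
  rw [← vswap i j r hr, Lv, List.prod_cons, this, Lblk_prod]

lemma Lh_prod (r : ℕ) (hr : 2*r = N+2) :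
    (Lh i j r).prod = Equiv.swap (i, j) (i, j+1) := by
  have h2 := hswap i j r hr
  have hv : ((Lv i j r) : List _).prod = rowRot (M+2) (N+2) i *
      (colRot (M+2) (N+2) j * rowRot (M+2) (N+2) i * colRot (M+2) (N+2) j ^ (M+1) *
        rowRot (M+2) (N+2) i) ^ r := by
    rw [Lv, List.prod_cons, List.prod_flatten, List.map_replicate, List.prod_replicate, Lblk_prod]
  rw [← h2]
  rw [Lh, List.prod_cons, List.prod_cons, List.prod_append, List.prod_append,
    List.prod_replicate, List.prod_replicate, hv]
  simp only [mul_assoc]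

lemma Lv_mem (r : ℕ) : ∀ g ∈ Lv i j r, g ∈ unitRotations (M+2) (N+2) := by
  intro g hg
  have hρ : rowRot (M+2) (N+2) i ∈ unitRotations (M+2) (N+2) := Or.inl ⟨i, rfl⟩
  have hγ : colRot (M+2) (N+2) j ∈ unitRotations (M+2) (N+2) := Or.inr ⟨j, rfl⟩
  simp only [Lv, List.mem_cons, List.mem_flatten, List.mem_replicate] at hg
  rcases hg with rfl | ⟨l, ⟨-, rfl⟩, hgl⟩
  · exact hρ
  simp only [Lblk, List.mem_cons, List.mem_append, List.mem_replicate,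
    List.mem_singleton] at hgl
  rcases hgl with rfl | rfl | h | rfl | h0
  · exact hγ
  · exact hρ
  · rw [h.2]; exact hγ
  · exact hρ
  · simp at h0

lemma Lh_mem (r : ℕ) : ∀ g ∈ Lh i j r, g ∈ unitRotations (M+2) (N+2) := by
  intro g hg
  have hρ : rowRot (M+2) (N+2) i ∈ unitRotations (M+2) (N+2) := Or.inl ⟨i, rfl⟩
  have hγ : colRot (M+2) (N+2) j ∈ unitRotations (M+2) (N+2) := Or.inr ⟨j, rfl⟩
  simp only [Lh, List.mem_cons, List.mem_append, List.mem_replicate] at hg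
  rcases hg with rfl | rfl | h | h | h
  · exact hγ
  · exact hρ
  · rw [h.2]; exact hγ
  · rw [h.2]; exact hρ
  · exact Lv_mem i j r g h

lemma Lv_length (r : ℕ) : (Lv i j r).length = 1 + r * (M+4) := by
  have : ((List.replicate r (Lblk i j)).flatten).length = r * (M+4) := by
    induction r with
    | zero => simp
    | succ r ih =>
        rw [List.replicate_succ, List.flatten_cons, List.length_append, ih]
        have hb : (Lblk i j).length = M+4 := by simp [Lblk]
        rw [hb]; ring
  simp [Lv, this]
  ring

lemma Lh_length (r : ℕ) : (Lh i j r).length = M + N + 5 + r * (M+4) := by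
  simp [Lh, Lv_length]
  ring

lemma len_bound (r : ℕ) (hr : 2*r = N+2) : M + N + 5 + r * (M+4) ≤ 3 * (M+2) * (N+2) := by
  have h1 : r * (M+4) ≤ (N+2) * (M+2) := by
    calc r * (M+4) ≤ r * (2*(M+2)) := Nat.mul_le_mul_left r (by omega)
      _ = (2*r) * (M+2) := by ring
      _ = (N+2) * (M+2) := by rw [hr]
  nlinarith

theorem core (M N r : ℕ) (hr : 2*r = N+2) (i : Fin (M+2)) (j : Fin (N+2)) :
    (∃ L : List (Equiv.Perm (Fin (M+2) × Fin (N+2))),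
      (∀ g ∈ L, g ∈ unitRotations (M+2) (N+2)) ∧
      L.prod = Equiv.swap (i, j) (i, j+1) ∧ L.length ≤ 3 * (M+2) * (N+2)) ∧
    (∃ L : List (Equiv.Perm (Fin (M+2) × Fin (N+2))),
      (∀ g ∈ L, g ∈ unitRotations (M+2) (N+2)) ∧
      L.prod = Equiv.swap (i, j) (i+1, j) ∧ L.length ≤ 3 * (M+2) * (N+2)) := by
  constructor
  · exact ⟨Lh i j r, Lh_mem i j r, Lh_prod i j r hr, by
      rw [Lh_length]; exact len_bound r hr⟩
  · refine ⟨Lv i j r, Lv_mem i j r, Lv_prod i j r hr, ?_⟩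
    rw [Lv_length]
    have := len_bound (M := M) (N := N) r hr
    omega

end Words

section Transpose

lemma permCongr_mul {α β : Type*} (e : α ≃ β) (f g : Equiv.Perm α) :
    e.permCongr (f * g) = e.permCongr f * e.permCongr g := by
  apply Equiv.ext
  intro x
  simp [Equiv.permCongr_apply, Equiv.Perm.mul_apply]

lemma permCongr_prod {α β : Type*} (e : α ≃ β) (L : List (Equiv.Perm α)) :
    (L.map (fun g => e.permCongr g)).prod = e.permCongr L.prod := by
  induction L with
  | nil => apply Equiv.ext; intro x; simp [Equiv.Perm.one_def]
  | cons g L ih => simp [permCongr_mul, ih]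

lemma permCongr_swap {α β : Type*} [DecidableEq α] [DecidableEq β] (e : α ≃ β) (u v : α) :
    e.permCongr (Equiv.swap u v) = Equiv.swap (e u) (e v) := by
  rw [Equiv.permCongr_def, Equiv.symm_trans_swap_trans]

lemma permCongr_rowRot (m n : ℕ) (a : Fin m) :
    (Equiv.prodComm (Fin m) (Fin n)).permCongr (rowRot m n a) = colRot n m a := by
  apply Equiv.ext
  rintro ⟨u, v⟩
  by_cases h : v = a <;> simp [rowRot, colRot, h]

lemma permCongr_colRot (m n : ℕ) (b : Fin n) :
    (Equiv.prodComm (Fin m) (Fin n)).permCongr (colRot m n b) = rowRot n m b := by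
  apply Equiv.ext
  rintro ⟨u, v⟩
  by_cases h : u = b <;> simp [rowRot, colRot, h]

lemma permCongr_mem (m n : ℕ) (g : Equiv.Perm (Fin m × Fin n)) (hg : g ∈ unitRotations m n) :
    (Equiv.prodComm (Fin m) (Fin n)).permCongr g ∈ unitRotations n m := by
  rcases hg with ⟨a, rfl⟩ | ⟨b, rfl⟩
  · rw [permCongr_rowRot]
    exact Or.inr ⟨a, rfl⟩
  · rw [permCongr_colRot]
    exact Or.inl ⟨b, rfl⟩

end Transpose

end Torus

/- When at least one of m and n is even, every transposition of two (horizontally or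
vertically) adjacent positions is a product of O(m n) unit rotations. -/
theorem adjacent_swap_bound :
    ∃ C : ℕ, 0 < C ∧ ∀ m n : ℕ, 2 ≤ m → 2 ≤ n → (Even m ∨ Even n) →
      ∀ i : Fin m, ∀ j : Fin n,
        (∃ L : List (Equiv.Perm (Fin m × Fin n)),
          (∀ g ∈ L, g ∈ unitRotations m n) ∧
          L.prod = Equiv.swap (i, j) (i, finRotate n j) ∧
          L.length ≤ C * m * n) ∧
        (∃ L : List (Equiv.Perm (Fin m × Fin n)),
          (∀ g ∈ L, g ∈ unitRotations m n) ∧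
          L.prod = Equiv.swap (i, j) (finRotate m i, j) ∧
          L.length ≤ C * m * n) := by
  refine ⟨3, by norm_num, ?_⟩
  intro m n hm hn hpar i j
  obtain ⟨M, rfl⟩ : ∃ M, m = M + 2 := ⟨m - 2, by omega⟩
  obtain ⟨N, rfl⟩ : ∃ N', n = N' + 2 := ⟨n - 2, by omega⟩
  simp only [finRotate_succ_apply]
  rcases hpar with hm2 | hn2
  · -- m even : transpose
    obtain ⟨r, hr⟩ : ∃ r, 2 * r = M + 2 := by
      rcases hm2 with ⟨t, ht⟩; exact ⟨t, by omega⟩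
    obtain ⟨⟨L1, h1m, h1p, h1l⟩, ⟨L2, h2m, h2p, h2l⟩⟩ := Torus.core N M r hr j i
    set E := Equiv.prodComm (Fin (N+2)) (Fin (M+2)) with hE
    constructor
    · refine ⟨L2.map (fun g => E.permCongr g), ?_, ?_, ?_⟩
      · intro g hg
        simp only [List.mem_map] at hg
        obtain ⟨g0, hg0, rfl⟩ := hg
        exact Torus.permCongr_mem _ _ g0 (h2m g0 hg0)
      · rw [Torus.permCongr_prod, h2p, Torus.permCongr_swap]
        rfl
      · rw [List.length_map]
        calc L2.length ≤ 3 * (N+2) * (M+2) := h2l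
          _ = 3 * (M+2) * (N+2) := by ring
    · refine ⟨L1.map (fun g => E.permCongr g), ?_, ?_, ?_⟩
      · intro g hg
        simp only [List.mem_map] at hg
        obtain ⟨g0, hg0, rfl⟩ := hg
        exact Torus.permCongr_mem _ _ g0 (h1m g0 hg0)
      · rw [Torus.permCongr_prod, h1p, Torus.permCongr_swap]
        rfl
      · rw [List.length_map]
        calc L1.length ≤ 3 * (N+2) * (M+2) := h1l
          _ = 3 * (M+2) * (N+2) := by ring
  · -- n even : direct
    obtain ⟨r, hr⟩ : ∃ r, 2 * r = N + 2 := by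
      rcases hn2 with ⟨t, ht⟩; exact ⟨t, by omega⟩
    exact Torus.core M N r hr i j
end
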